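/- Let G be a finite simple graph and a, b two nonadjacent vertices of G. For every edge e' of G, inserting the edge (a,b) increases the truss number of e' by at most 1: φ_{G+(a,b)}(e') ≤ φ_G(e') + 1. -/

import Mathlib

open SimpleGraph

variable {V : Type*}

/-- `H` is a `k`-truss of `G`: a connected subgraph with at least one edge in which
every edge lies in at least `k - 2` triangles of `H` (i.e. the endpoints of every edge
have at least `k - 2` common neighbors in `H`). -/
def IsTruss (G : SimpleGraph V) (k : ℕ) (H : G.Subgraph) : Prop :=
  H.Connected ∧ H.edgeSet.Nonempty ∧
    ∀ a b : V, H.Adj a b → k - 2 ≤ {c : V | H.Adj a c ∧ H.Adj b c}.ncard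

/-- The truss number `φ_G(e)` of an edge `e`: the largest `k` such that `e` lies in some
`k`-truss of `G`. -/
noncomputable def trussNumber (G : SimpleGraph V) (e : Sym2 V) : ℕ :=
  sSup {k : ℕ | ∃ H : G.Subgraph, IsTruss G k H ∧ e ∈ H.edgeSet}

/-- The support of the edge `(a, b)` in a subgraph `H`: the number of triangles of `H`
containing it, i.e. the number of common neighbors of `a` and `b` in `H`. -/
noncomputable def suppIn {G : SimpleGraph V} (H : G.Subgraph) (a b : V) : ℕ :=
  {c : V | H.Adj a c ∧ H.Adj b c}.ncard

/-- The support of the edge `(a, b)` in `G`. -/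
noncomputable def suppG (G : SimpleGraph V) (a b : V) : ℕ :=
  {c : V | G.Adj a c ∧ G.Adj b c}.ncard

/-- `S_{a,b}`: the common neighbors of `a` and `b` in `G`. -/
def commonNbrs (G : SimpleGraph V) (a b : V) : Set V :=
  {c : V | G.Adj a c ∧ G.Adj b c}

/-- `E_{S_{a,b} ↔ {a,b}}`: the edges of `G` joining a common neighbor of `a` and `b`
to `a` or to `b`. -/
def sideEdges (G : SimpleGraph V) (a b : V) : Set (Sym2 V) :=
  {e | ∃ c, G.Adj a c ∧ G.Adj b c ∧ (e = s(a, c) ∨ e = s(b, c))}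

/-- `k_min((a,b))`: minimum truss number among the edges of `E_{S_{a,b} ↔ {a,b}}`. -/
noncomputable def kmin (G : SimpleGraph V) (a b : V) : ℕ :=
  sInf (trussNumber G '' sideEdges G a b)

/-- `k_max((a,b))`: maximum truss number among the edges of `E_{S_{a,b} ↔ {a,b}}`. -/
noncomputable def kmax (G : SimpleGraph V) (a b : V) : ℕ :=
  sSup (trussNumber G '' sideEdges G a b)

/-- `G + (a,b)`: the graph obtained from `G` by inserting the edge `(a, b)`. -/
def insertEdge (G : SimpleGraph V) (a b : V) : SimpleGraph V :=
  G ⊔ fromEdgeSet {s(a, b)}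

private lemma truss_bddAbove [Fintype V] (G : SimpleGraph V) (e : Sym2 V) :
    BddAbove {k : ℕ | ∃ H : G.Subgraph, IsTruss G k H ∧ e ∈ H.edgeSet} := by
  refine ⟨Fintype.card V + 2, ?_⟩
  rintro k ⟨H, ⟨-, -, hk⟩, he⟩
  induction e using Sym2.inductionOn with
  | hf x y =>
    rw [Subgraph.mem_edgeSet] at he
    have h1 := hk x y he
    have h2 : {c : V | H.Adj x c ∧ H.Adj y c}.ncard ≤ Fintype.card V := by
      have := Set.ncard_le_ncard (Set.subset_univ {c : V | H.Adj x c ∧ H.Adj y c})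
        Set.finite_univ
      rwa [Set.ncard_univ, Nat.card_eq_fintype_card] at this
    omega

private lemma two_mem_truss (G : SimpleGraph V) (e : Sym2 V) (he : e ∈ G.edgeSet) :
    2 ∈ {k : ℕ | ∃ H : G.Subgraph, IsTruss G k H ∧ e ∈ H.edgeSet} := by
  induction e using Sym2.inductionOn with
  | hf x y =>
    rw [mem_edgeSet] at he
    refine ⟨G.subgraphOfAdj he, ⟨Subgraph.subgraphOfAdj_connected he, ⟨s(x, y), ?_⟩,
      fun _ _ _ => Nat.zero_le _⟩, ?_⟩ <;>
      simp [edgeSet_subgraphOfAdj]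

theorem stmt4 [Fintype V] (G : SimpleGraph V) (a b : V) (hab : a ≠ b)
    (hnadj : ¬ G.Adj a b) (e' : Sym2 V) (he' : e' ∈ G.edgeSet) :
    trussNumber (insertEdge G a b) e' ≤ trussNumber G e' + 1 := by
  induction e' using Sym2.inductionOn with
  | hf x y =>
  rw [mem_edgeSet] at he'
  have hBG := truss_bddAbove G s(x, y)
  have he'' : s(x, y) ∈ (insertEdge G a b).edgeSet := by
    rw [mem_edgeSet]
    exact Or.inl he'
  have hG2 : (2 : ℕ) ≤ trussNumber G s(x, y) :=
    le_csSup hBG (two_mem_truss G s(x, y) (by rwa [mem_edgeSet]))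
  refine csSup_le ⟨2, two_mem_truss _ s(x, y) he''⟩ ?_
  rintro k ⟨H, ⟨hconn, hne, htri⟩, heH⟩
  by_cases hk3 : k ≤ 3
  · omega
  push_neg at hk3
  rw [Subgraph.mem_edgeSet] at heH
  have habH : ∀ x y : V, H.Adj x y → s(x, y) ≠ s(a, b) → G.Adj x y := by
    intro u v huv hne'
    have h := H.adj_sub huv
    rw [insertEdge, sup_adj, fromEdgeSet_adj] at h
    rcases h with h | ⟨h, -⟩
    · exact h
    · exact absurd h hne'
  set H' : G.Subgraph :=
    { verts := H.verts
      Adj := fun u v => H.Adj u v ∧ s(u, v) ≠ s(a, b)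
      adj_sub := fun h => habH _ _ h.1 h.2
      edge_vert := fun h => H.edge_vert h.1
      symm := by
        constructor
        intro u v h
        refine ⟨h.1.symm, ?_⟩
        rw [Sym2.eq_swap]
        exact h.2 } with hH'def
  have hH'adj : ∀ u v : V, H'.Adj u v ↔ H.Adj u v ∧ s(u, v) ≠ s(a, b) := fun _ _ => Iff.rfl
  have hcommon : H.Adj a b → ∃ c, H.Adj a c ∧ H.Adj b c := by
    intro hHab
    have h1 := htri a b hHab
    have : {c : V | H.Adj a c ∧ H.Adj b c}.Nonempty := by
      apply Set.nonempty_of_ncard_ne_zero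
      omega
    obtain ⟨c, hc⟩ := this
    exact ⟨c, hc⟩
  have hreach : ∀ u v : H.verts, H.coe.Reachable u v → H'.coe.Reachable u v := by
    intro u v huv
    obtain ⟨p⟩ := huv
    induction p with
    | nil => exact Reachable.refl _
    | cons h p ih =>
      rename_i u w v
      have hAdj : H.Adj ↑u ↑w := h
      by_cases hcase : s((u : V), (w : V)) = s(a, b)
      · rw [Sym2.eq_iff] at hcase
        have hHab : H.Adj a b := by
          rcases hcase with ⟨h1, h2⟩ | ⟨h1, h2⟩
          · rwa [h1, h2] at hAdj
          · rw [h1, h2] at hAdj; exact hAdj.symm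
        obtain ⟨c, hac, hbc⟩ := hcommon hHab
        have hca : c ≠ a := fun h => by rw [h] at hac; exact hac.ne rfl
        have hcb : c ≠ b := fun h => by rw [h] at hbc; exact hbc.ne rfl
        have hcV : c ∈ H.verts := H.edge_vert hac.symm
        have h1' : H'.Adj ↑u c := by
          rcases hcase with ⟨ha1, -⟩ | ⟨ha1, -⟩
          · refine ⟨by rw [ha1]; exact hac, ?_⟩
            rw [ha1]
            simp only [ne_eq, Sym2.eq_iff]
            push_neg
            exact ⟨fun _ => hcb, fun h => absurd h hab⟩
          · refine ⟨by rw [ha1]; exact hbc, ?_⟩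
            rw [ha1]
            simp only [ne_eq, Sym2.eq_iff]
            push_neg
            exact ⟨fun h => absurd h hab.symm, fun _ => hca⟩
        have h2' : H'.Adj c ↑w := by
          rcases hcase with ⟨-, hb1⟩ | ⟨-, hb1⟩
          · refine ⟨by rw [hb1]; exact hbc.symm, ?_⟩
            rw [hb1]
            simp only [ne_eq, Sym2.eq_iff]
            push_neg
            exact ⟨fun h => absurd h hca, fun _ => hab.symm⟩
          · refine ⟨by rw [hb1]; exact hac.symm, ?_⟩
            rw [hb1]
            simp only [ne_eq, Sym2.eq_iff]
            push_neg
            exact ⟨fun _ => hab, fun h => absurd h hcb⟩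
        have r1 : H'.coe.Reachable u ⟨c, hcV⟩ := Adj.reachable h1'
        have r2 : H'.coe.Reachable ⟨c, hcV⟩ w := Adj.reachable h2'
        exact (r1.trans r2).trans ih
      · have hA' : H'.coe.Adj u w := ⟨hAdj, hcase⟩
        exact (Adj.reachable hA').trans ih
  have hconn' : H'.Connected := by
    rw [Subgraph.connected_iff]
    refine ⟨⟨fun u v => hreach u v (hconn.coe.preconnected u v)⟩, hconn.nonempty⟩
  have htri' : ∀ u v : V, H'.Adj u v →
      k - 1 - 2 ≤ {c : V | H'.Adj u c ∧ H'.Adj v c}.ncard := by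
    intro u v huv
    obtain ⟨hH, hne'⟩ := huv
    classical
    set w : V := if u = a then b else if u = b then a else if v = a then b else a with hw
    have hsub : {c : V | H.Adj u c ∧ H.Adj v c} \ {w} ⊆
        {c : V | H'.Adj u c ∧ H'.Adj v c} := by
      rintro c ⟨⟨h1, h2⟩, hcw⟩
      rw [Set.mem_singleton_iff] at hcw
      refine ⟨⟨h1, ?_⟩, h2, ?_⟩
      · intro hEq
        rw [Sym2.eq_iff] at hEq
        rcases hEq with ⟨hua, hcb⟩ | ⟨hub, hca⟩
        · exact hcw (by rw [hcb, hw, if_pos hua])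
        · by_cases hua : u = a
          · exact hab (hua.symm.trans hub)
          · exact hcw (by rw [hca, hw, if_neg hua, if_pos hub])
      · intro hEq
        rw [Sym2.eq_iff] at hEq
        rcases hEq with ⟨hva, hcb⟩ | ⟨hvb, hca⟩
        · have hu1 : u ≠ a := fun h => hH.ne (h.trans hva.symm)
          have hu2 : u ≠ b := by
            intro h
            apply hne'
            rw [h, hva, Sym2.eq_swap]
          exact hcw (by rw [hcb, hw, if_neg hu1, if_neg hu2, if_pos hva])
        · have hu1 : u ≠ a := by
            intro h
            apply hne'
            rw [h, hvb]
          have hu2 : u ≠ b := fun h => hH.ne (h.trans hvb.symm)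
          have hv1 : v ≠ a := fun h => hab (h.symm.trans hvb)
          exact hcw (by rw [hca, hw, if_neg hu1, if_neg hu2, if_neg hv1])
    have hfin : {c : V | H'.Adj u c ∧ H'.Adj v c}.Finite := Set.toFinite _
    have hle1 : ({c : V | H.Adj u c ∧ H.Adj v c} \ {w}).ncard ≤
        {c : V | H'.Adj u c ∧ H'.Adj v c}.ncard := Set.ncard_le_ncard hsub hfin
    have hle2 : {c : V | H.Adj u c ∧ H.Adj v c}.ncard ≤
        ({c : V | H.Adj u c ∧ H.Adj v c} \ {w}).ncard + 1 := by
      have hsub2 : {c : V | H.Adj u c ∧ H.Adj v c} ⊆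
          ({c : V | H.Adj u c ∧ H.Adj v c} \ {w}) ∪ {w} := by
        intro c hc
        by_cases h : c = w
        · exact Or.inr h
        · exact Or.inl ⟨hc, h⟩
      calc {c : V | H.Adj u c ∧ H.Adj v c}.ncard
          ≤ (({c : V | H.Adj u c ∧ H.Adj v c} \ {w}) ∪ {w}).ncard :=
            Set.ncard_le_ncard hsub2 (Set.toFinite _)
        _ ≤ ({c : V | H.Adj u c ∧ H.Adj v c} \ {w}).ncard + ({w} : Set V).ncard :=
            Set.ncard_union_le _ _
        _ = ({c : V | H.Adj u c ∧ H.Adj v c} \ {w}).ncard + 1 := by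
            rw [Set.ncard_singleton]
    have h0 := htri u v hH
    omega
  have hxyne : s(x, y) ≠ s(a, b) := by
    intro h
    rw [Sym2.eq_iff] at h
    rcases h with ⟨rfl, rfl⟩ | ⟨rfl, rfl⟩
    · exact hnadj he'
    · exact hnadj he'.symm
  have hmem : s(x, y) ∈ H'.edgeSet := ⟨heH, hxyne⟩
  have hk1 : k - 1 ≤ trussNumber G s(x, y) :=
    le_csSup hBG ⟨H', ⟨hconn', ⟨s(x, y), hmem⟩, htri'⟩, hmem⟩
  omega
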